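/- Let ℓ be a probability measure on a finite set X and ω a probability measure on X. Then sup over f : X → ℝ of ( ∑_a (f(a) − log ∑_b e^{f(b)}ℓ[b])·ω[a] ) equals the relative entropy H(ω‖ℓ) = ∑_a ω[a]·log(ω[a]/ℓ[a]) if ω ≪ ℓ, and equals +∞ otherwise. -/

import Mathlib

open Real Finset

theorem donsker_varadhan_finite {X : Type*} [Fintype X]
    (ℓ ω : X → ℝ) (hℓ : ∀ a, 0 ≤ ℓ a) (hℓsum : ∑ a, ℓ a = 1)
    (hω : ∀ a, 0 ≤ ω a) (hωsum : ∑ a, ω a = 1) :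
    ((∀ a, ℓ a = 0 → ω a = 0) →
      IsLUB {z : ℝ | ∃ f : X → ℝ,
          z = ∑ a, (f a - Real.log (∑ b, Real.exp (f b) * ℓ b)) * ω a}
        (∑ a ∈ Finset.univ.filter (fun a => 0 < ω a),
          ω a * Real.log (ω a / ℓ a))) ∧
    (¬ (∀ a, ℓ a = 0 → ω a = 0) →
      ¬ BddAbove {z : ℝ | ∃ f : X → ℝ,
          z = ∑ a, (f a - Real.log (∑ b, Real.exp (f b) * ℓ b)) * ω a}) := by
  classical
  set T : Finset X := Finset.univ.filter (fun a => 0 < ω a) with hTdef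
  have hωT : ∑ a ∈ T, ω a = 1 := by
    rw [hTdef, Finset.sum_filter_of_ne (fun a _ h => lt_of_le_of_ne (hω a) (Ne.symm h))]
    exact hωsum
  have hZpos : ∀ f : X → ℝ, 0 < ∑ b, Real.exp (f b) * ℓ b := by
    intro f
    have hex : ∃ a, 0 < ℓ a := by
      by_contra h
      push_neg at h
      have h0 : ∑ a, ℓ a = 0 := Finset.sum_eq_zero (fun a _ => le_antisymm (h a) (hℓ a))
      rw [h0] at hℓsum; norm_num at hℓsum
    obtain ⟨a0, ha0⟩ := hex
    exact Finset.sum_pos' (fun b _ => mul_nonneg (Real.exp_pos _).le (hℓ b))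
      ⟨a0, Finset.mem_univ a0, mul_pos (Real.exp_pos _) ha0⟩
  constructor
  · intro habs
    have hℓT : ∀ a ∈ T, 0 < ℓ a := by
      intro a ha
      have hωa : 0 < ω a := (Finset.mem_filter.mp ha).2
      rcases (hℓ a).lt_or_eq with h | h
      · exact h
      · exact absurd (habs a h.symm) (ne_of_gt hωa)
    -- upper bound
    have hub : ∀ f : X → ℝ,
        ∑ a, (f a - Real.log (∑ b, Real.exp (f b) * ℓ b)) * ω a ≤
        ∑ a ∈ T, ω a * Real.log (ω a / ℓ a) := by
      intro f
      set Z := ∑ b, Real.exp (f b) * ℓ b with hZ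
      have hZp : 0 < Z := hZpos f
      have h1 : ∑ a, (f a - Real.log Z) * ω a = ∑ a ∈ T, (f a - Real.log Z) * ω a := by
        rw [hTdef]
        symm
        apply Finset.sum_filter_of_ne
        intro a _ h
        rcases (hω a).lt_or_eq with hl | he
        · exact hl
        · exfalso; apply h; rw [← he, mul_zero]
      rw [h1]
      have key : ∀ a ∈ T, (f a - Real.log Z) * ω a ≤
          ω a * Real.log (ω a / ℓ a) + (Real.exp (f a) * ℓ a / Z - ω a) := by
        intro a ha
        have hωa : 0 < ω a := (Finset.mem_filter.mp ha).2
        have hℓa : 0 < ℓ a := hℓT a ha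
        set x := Real.exp (f a) * ℓ a / (Z * ω a) with hx
        have hxpos : 0 < x := div_pos (mul_pos (Real.exp_pos _) hℓa) (mul_pos hZp hωa)
        have hlogx : Real.log x = f a - Real.log Z - Real.log (ω a / ℓ a) := by
          rw [hx, Real.log_div (by positivity) (by positivity),
            Real.log_mul (Real.exp_pos _).ne' hℓa.ne', Real.log_exp,
            Real.log_mul hZp.ne' hωa.ne', Real.log_div hωa.ne' hℓa.ne']
          ring
        have hineq := Real.log_le_sub_one_of_pos hxpos
        have h2 : ω a * Real.log x ≤ ω a * (x - 1) :=
          mul_le_mul_of_nonneg_left hineq hωa.le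
        have h3 : ω a * x = Real.exp (f a) * ℓ a / Z := by
          rw [hx]; field_simp
        have h4 : (f a - Real.log Z) * ω a
            = ω a * Real.log (ω a / ℓ a) + ω a * Real.log x := by
          rw [hlogx]; ring
        rw [h4]
        have h5 : ω a * (x - 1) = Real.exp (f a) * ℓ a / Z - ω a := by
          rw [mul_sub, h3]; ring
        linarith
      calc ∑ a ∈ T, (f a - Real.log Z) * ω a
          ≤ ∑ a ∈ T, (ω a * Real.log (ω a / ℓ a) + (Real.exp (f a) * ℓ a / Z - ω a)) :=
            Finset.sum_le_sum key
        _ = ∑ a ∈ T, ω a * Real.log (ω a / ℓ a)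
            + ((∑ a ∈ T, Real.exp (f a) * ℓ a) / Z - 1) := by
            rw [Finset.sum_add_distrib, Finset.sum_sub_distrib, hωT, Finset.sum_div]
        _ ≤ ∑ a ∈ T, ω a * Real.log (ω a / ℓ a) := by
            have hsub : ∑ a ∈ T, Real.exp (f a) * ℓ a ≤ Z := by
              rw [hZ]
              exact Finset.sum_le_sum_of_subset_of_nonneg
                (by rw [hTdef]; exact Finset.filter_subset _ _)
                (fun b _ _ => mul_nonneg (Real.exp_pos _).le (hℓ b))
            have h6 : (∑ a ∈ T, Real.exp (f a) * ℓ a) / Z ≤ 1 := (div_le_one hZp).mpr hsub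
            linarith
    set H := ∑ a ∈ T, ω a * Real.log (ω a / ℓ a) with hH
    set c := ∑ b ∈ Finset.univ.filter (fun a => ¬ 0 < ω a), ℓ b with hc
    have hcnn : 0 ≤ c := Finset.sum_nonneg (fun b _ => hℓ b)
    have hmem : ∀ n : ℕ, (H - Real.log (1 + Real.exp (-(n : ℝ)) * c)) ∈
        {z : ℝ | ∃ f : X → ℝ,
          z = ∑ a, (f a - Real.log (∑ b, Real.exp (f b) * ℓ b)) * ω a} := by
      intro n
      set fn : X → ℝ := fun a => if 0 < ω a then Real.log (ω a / ℓ a) else -(n : ℝ) with hfn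
      refine ⟨fn, ?_⟩
      have hZn : ∑ b, Real.exp (fn b) * ℓ b = 1 + Real.exp (-(n : ℝ)) * c := by
        rw [← Finset.sum_filter_add_sum_filter_not Finset.univ (fun a => 0 < ω a)]
        congr 1
        · rw [← hωT, hTdef]
          apply Finset.sum_congr rfl
          intro b hb
          have hωb : 0 < ω b := (Finset.mem_filter.mp hb).2
          have hℓb : 0 < ℓ b := hℓT b (by rw [hTdef]; exact hb)
          rw [hfn]
          simp only [if_pos hωb]
          rw [Real.exp_log (div_pos hωb hℓb), div_mul_cancel₀ _ hℓb.ne']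
        · rw [hc, Finset.mul_sum]
          apply Finset.sum_congr rfl
          intro b hb
          have hωb : ¬ 0 < ω b := (Finset.mem_filter.mp hb).2
          rw [hfn]
          simp only [if_neg hωb]
      rw [hZn]
      have h1 : ∑ a, (fn a - Real.log (1 + Real.exp (-(n : ℝ)) * c)) * ω a
          = ∑ a ∈ T, (fn a - Real.log (1 + Real.exp (-(n : ℝ)) * c)) * ω a := by
        rw [hTdef]
        symm
        apply Finset.sum_filter_of_ne
        intro a _ h
        rcases (hω a).lt_or_eq with hl | he
        · exact hl
        · exfalso; apply h; rw [← he, mul_zero]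
      rw [h1]
      have h2 : ∀ a ∈ T, (fn a - Real.log (1 + Real.exp (-(n : ℝ)) * c)) * ω a
          = ω a * Real.log (ω a / ℓ a) - Real.log (1 + Real.exp (-(n : ℝ)) * c) * ω a := by
        intro a ha
        have hωa : 0 < ω a := (Finset.mem_filter.mp ha).2
        rw [hfn]
        simp only [if_pos hωa]
        ring
      rw [Finset.sum_congr rfl h2, Finset.sum_sub_distrib, ← Finset.mul_sum, hωT, mul_one, hH]
    have hlim : Filter.Tendsto (fun n : ℕ => H - Real.log (1 + Real.exp (-(n : ℝ)) * c))
        Filter.atTop (nhds H) := by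
      have h1 : Filter.Tendsto (fun n : ℕ => Real.exp (-(n : ℝ))) Filter.atTop (nhds 0) := by
        apply Real.tendsto_exp_atBot.comp
        exact Filter.tendsto_neg_atBot_iff.mpr tendsto_natCast_atTop_atTop
      have h2 : Filter.Tendsto (fun n : ℕ => 1 + Real.exp (-(n : ℝ)) * c)
          Filter.atTop (nhds 1) := by
        have := (h1.mul_const c).const_add 1
        simpa using this
      have h3 : Filter.Tendsto (fun n : ℕ => Real.log (1 + Real.exp (-(n : ℝ)) * c))
          Filter.atTop (nhds 0) := by
        have := h2.log one_ne_zero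
        simpa using this
      have := (tendsto_const_nhds (x := H) (f := Filter.atTop (α := ℕ))).sub h3
      simpa using this
    constructor
    · rintro z ⟨f, rfl⟩
      exact hub f
    · intro u hu
      exact le_of_tendsto' hlim (fun n => hu (hmem n))
  · intro hnabs hbdd
    push_neg at hnabs
    obtain ⟨a0, hℓ0, hω0⟩ := hnabs
    have hω0p : 0 < ω a0 := lt_of_le_of_ne (hω a0) (Ne.symm hω0)
    obtain ⟨u, hu⟩ := hbdd
    have hmem : ∀ t : ℝ, t * ω a0 ∈
        {z : ℝ | ∃ f : X → ℝ,
          z = ∑ a, (f a - Real.log (∑ b, Real.exp (f b) * ℓ b)) * ω a} := by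
      intro t
      set f : X → ℝ := fun a => if a = a0 then t else 0 with hf
      refine ⟨f, ?_⟩
      have hZ : ∑ b, Real.exp (f b) * ℓ b = 1 := by
        rw [← hℓsum]
        apply Finset.sum_congr rfl
        intro b _
        by_cases hb : b = a0
        · subst hb; rw [hℓ0, mul_zero]
        · rw [hf]; simp [hb]
      rw [hZ, Real.log_one]
      have : ∀ a, (f a - 0) * ω a = if a = a0 then t * ω a0 else 0 := by
        intro a
        by_cases ha : a = a0
        · subst ha; rw [hf]; simp
        · rw [hf]; simp [ha]
      rw [Finset.sum_congr rfl (fun a _ => this a), Finset.sum_ite_eq' Finset.univ a0]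
      simp
    have h1 := hu (hmem ((u + 1) / ω a0))
    rw [div_mul_cancel₀ _ hω0p.ne'] at h1
    linarith
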